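/- Let 0 < α < 1/2 and let the relative revenue of any mining policy π be REV(π) = R₁(π)/(R₁(π)+R₂(π)), where in any epoch each block of the honest network that is excluded from the main chain (overridden) corresponds injectively to a distinct accepted block of the attacker. If per T rounds the attacker creates k_T blocks and the honest network creates l_T = T - k_T blocks, with k_T/T → α and l_T/T → 1-α almost surely, and the attacker's accepted blocks satisfy Σ r¹_t ≤ k_T while the honest accepted blocks satisfy Σ r²_t ≥ l_T - k_T, then limsup of the relative revenue is at most α/(1-α). -/

import Mathlib

open MeasureTheory Filter

/-- Upper bound on selfish mining revenue (Proposition 1).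
If per T rounds the attacker creates k_T blocks and the honest network
l_T = T - k_T blocks, with k_T/T → α and l_T/T → 1-α almost surely
(0 < α < 1/2), the attacker's accepted rewards satisfy Σ_{t<T} r¹_t ≤ k_T and
the honest accepted rewards satisfy Σ_{t<T} r²_t ≥ l_T - k_T (each overridden
honest block corresponds injectively to an accepted attacker block), then
almost surely the limsup of the relative revenue
(Σ r¹)/(Σ r¹ + Σ r²) is at most α/(1-α). -/
theorem selfish_mining_revenue_upper_bound {Ω : Type*} [MeasurableSpace Ω]
    (μ : Measure Ω) [IsProbabilityMeasure μ]
    (α : ℝ) (hα0 : 0 < α) (hα : α < 1/2)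
    (k : ℕ → Ω → ℕ) (hkT : ∀ T ω, k T ω ≤ T)
    (r₁ r₂ : ℕ → Ω → ℝ)
    (hr₁ : ∀ t ω, 0 ≤ r₁ t ω) (hr₂ : ∀ t ω, 0 ≤ r₂ t ω)
    (hk : ∀ᵐ ω ∂μ, Tendsto (fun T => (k T ω : ℝ) / T) atTop (nhds α))
    (hl : ∀ᵐ ω ∂μ, Tendsto (fun T : ℕ => ((T : ℝ) - k T ω) / T) atTop (nhds (1 - α)))
    (hub₁ : ∀ᵐ ω ∂μ, ∀ T, (∑ t ∈ Finset.range T, r₁ t ω) ≤ k T ω)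
    (hlb₂ : ∀ᵐ ω ∂μ, ∀ T : ℕ,
      ((T : ℝ) - k T ω) - k T ω ≤ ∑ t ∈ Finset.range T, r₂ t ω) :
    ∀ᵐ ω ∂μ,
      Filter.limsup (fun T => (∑ t ∈ Finset.range T, r₁ t ω) /
          ((∑ t ∈ Finset.range T, r₁ t ω) + (∑ t ∈ Finset.range T, r₂ t ω)))
        atTop ≤ α / (1 - α) := by
  filter_upwards [hk, hl, hub₁, hlb₂] with ω hkω hlω hub hlb
  set S₁ := fun T => ∑ t ∈ Finset.range T, r₁ t ω with hS₁
  set S₂ := fun T => ∑ t ∈ Finset.range T, r₂ t ω with hS₂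
  have hS₁0 : ∀ T, 0 ≤ S₁ T := fun T => Finset.sum_nonneg fun t _ => hr₁ t ω
  have hS₂0 : ∀ T, 0 ≤ S₂ T := fun T => Finset.sum_nonneg fun t _ => hr₂ t ω
  set g := fun T : ℕ => (k T ω : ℝ) / ((T : ℝ) - k T ω) with hgdef
  have hg : Tendsto g atTop (nhds (α / (1 - α))) := by
    have h := hkω.div hlω (by linarith : (1:ℝ) - α ≠ 0)
    apply h.congr'
    filter_upwards [eventually_ge_atTop 1] with T hT
    have hT0 : (T : ℝ) ≠ 0 := by positivity
    rw [Pi.div_apply]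
    exact div_div_div_cancel_right₀ hT0 _ _
  -- eventually T - 2k > 0
  have hev2 : ∀ᶠ T : ℕ in atTop, 0 < (T : ℝ) - 2 * k T ω := by
    have h2 : Tendsto (fun T : ℕ => (k T ω : ℝ) / T) atTop (nhds α) := hkω
    have := h2.eventually (eventually_lt_nhds hα)
    filter_upwards [this, eventually_ge_atTop 1] with T h1 hT1
    have hT0 : (0:ℝ) < T := by exact_mod_cast hT1
    have := (div_lt_iff₀ hT0).mp h1
    linarith
  have hev : ∀ᶠ T : ℕ in atTop,
      S₁ T / (S₁ T + S₂ T) ≤ g T := by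
    filter_upwards [hev2] with T hC
    have hK0 : (0:ℝ) ≤ k T ω := by positivity
    have hC' : ((T : ℝ) - k T ω) - k T ω ≤ S₂ T := hlb T
    have hCpos : 0 < ((T : ℝ) - k T ω) - k T ω := by linarith
    have hden : 0 < S₁ T + S₂ T := by
      have := hS₁0 T; linarith
    rw [div_le_div_iff₀ hden (by linarith : (0:ℝ) < (T:ℝ) - k T ω)]
    have h1 : S₁ T ≤ (k T ω : ℝ) := hub T
    nlinarith [hS₁0 T, hS₂0 T]
  have hcob : IsCoboundedUnder (· ≤ ·) atTop
      (fun T => S₁ T / (S₁ T + S₂ T)) := by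
    apply isCoboundedUnder_le_of_eventually_le atTop (x := 0)
    filter_upwards with T
    exact div_nonneg (hS₁0 T) (add_nonneg (hS₁0 T) (hS₂0 T))
  have hbdd : IsBoundedUnder (· ≤ ·) atTop g := hg.isBoundedUnder_le
  calc Filter.limsup (fun T => S₁ T / (S₁ T + S₂ T)) atTop
      ≤ Filter.limsup g atTop := limsup_le_limsup hev hcob hbdd
    _ = α / (1 - α) := hg.limsup_eq
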